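/- For every integer n ≥ 1, the polynomial K_{t_n}(X,Y) = ∑_{a ∈ P_{t_n}} X^{nz(a)} Y^{ht(a)} satisfies, in the polynomial ring ℤ[X,Y], the identity (1 - Y) · K_{t_n}(X,Y) = (1 - Y)(1 + XY)^n + X·Y^2·(1 + XY)^{n-1} - X·Y^2·(Y(1 + X))^{n-1}. -/

import Mathlib

open MvPolynomial

/-- The poset `P_{t_n}`: lattice points `a ∈ ℕ^n` with `a i ≤ 1` for the first
`n - 1` coordinates and total coordinate sum at most `n`, ordered coordinatewise. -/
def Ptn (n : ℕ) : Set (Fin n → ℕ) :=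
  {a | (∀ i : Fin n, (i : ℕ) < n - 1 → a i ≤ 1) ∧ ∑ i, a i ≤ n}

/-- The variable `X` of `ℤ[X,Y]` (realized as `MvPolynomial (Fin 2) ℤ`). -/
noncomputable def Xv : MvPolynomial (Fin 2) ℤ := MvPolynomial.X 0

/-- The variable `Y` of `ℤ[X,Y]`. -/
noncomputable def Yv : MvPolynomial (Fin 2) ℤ := MvPolynomial.X 1

/-- The polynomial `K_{t_n}(X,Y) = ∑_{a ∈ P_{t_n}} X^{nz(a)} Y^{ht(a)}`, where the
(finite) sum ranges over the elements of `P_{t_n}`. -/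
noncomputable def Kpoly (n : ℕ) : MvPolynomial (Fin 2) ℤ :=
  ∑ᶠ a ∈ Ptn n, Xv ^ (Finset.univ.filter fun i => a i ≠ 0).card * Yv ^ (∑ i, a i)

lemma snoc_inj {m : ℕ} (b b' : Fin m → ℕ) (c c' : ℕ)
    (h : Fin.snoc b c = (Fin.snoc b' c' : Fin (m+1) → ℕ)) : b = b' ∧ c = c' := by
  constructor
  · funext j
    have := congrFun h (Fin.castSucc j)
    simpa using this
  · have := congrFun h (Fin.last m)
    simpa using this

lemma ptn_eq (m : ℕ) :
    Ptn (m+1) = ↑((((Fintype.piFinset fun _ : Fin m => Finset.range 2) ×ˢ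
        Finset.range (m+2)).filter
        (fun p => ∑ j, p.1 j + p.2 ≤ m+1)).image (fun p => (Fin.snoc p.1 p.2 : Fin (m+1) → ℕ))) := by
  ext a
  simp only [Ptn, Set.mem_setOf_eq, Finset.coe_image, Set.mem_image, Finset.mem_coe,
    Finset.mem_filter, Finset.mem_product, Fintype.mem_piFinset, Finset.mem_range]
  constructor
  · rintro ⟨h1, h2⟩
    refine ⟨(fun j => a (Fin.castSucc j), a (Fin.last m)), ⟨⟨fun j => ?_, ?_⟩, ?_⟩, ?_⟩
    · dsimp only
      have := h1 (Fin.castSucc j) (by simp)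
      omega
    · dsimp only
      have : a (Fin.last m) ≤ ∑ i, a i :=
        Finset.single_le_sum (fun i _ => Nat.zero_le _) (Finset.mem_univ _)
      omega
    · dsimp only
      rw [← Fin.sum_univ_castSucc]; exact h2
    · funext i
      refine Fin.lastCases ?_ ?_ i
      · simp
      · intro j; simp
  · rintro ⟨⟨b, c⟩, ⟨⟨hb, hc⟩, hsum⟩, rfl⟩
    constructor
    · intro i hi
      have hne : i ≠ Fin.last m := by
        intro h; rw [h] at hi; simp at hi
      obtain ⟨j, rfl⟩ := Fin.exists_castSucc_eq.mpr hne
      have := hb j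
      simp only [Fin.snoc_castSucc]
      dsimp only at this ⊢
      omega
    · rw [Fin.sum_univ_castSucc]
      simpa using hsum

lemma ht_snoc {m : ℕ} (b : Fin m → ℕ) (c : ℕ) :
    ∑ i, (Fin.snoc b c : Fin (m+1) → ℕ) i = ∑ j, b j + c := by
  rw [Fin.sum_univ_castSucc]; simp

lemma nz_snoc {m : ℕ} (b : Fin m → ℕ) (c : ℕ) (hb : ∀ j, b j ≤ 1) :
    (Finset.univ.filter fun i => (Fin.snoc b c : Fin (m+1) → ℕ) i ≠ 0).card
      = ∑ j, b j + (if c = 0 then 0 else 1) := by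
  rw [Finset.card_filter, Fin.sum_univ_castSucc]
  simp only [Fin.snoc_castSucc, Fin.snoc_last]
  congr 1
  · apply Finset.sum_congr rfl
    intro j _
    have := hb j
    split <;> omega
  · by_cases h : c = 0 <;> simp [h]

lemma innerSum' (k M : ℕ) :
    (1 - Yv) * ∑ c ∈ Finset.range (M+1),
        Xv ^ (k + if c = 0 then 0 else 1) * Yv ^ (k + c)
      = (Xv*Yv)^k * ((1 - Yv + Xv*Yv) - Xv * Yv^(M+1)) := by
  rw [Finset.sum_range_succ']
  have hg : (1 - Yv) * ∑ c ∈ Finset.range M, Yv ^ c = 1 - Yv ^ M := by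
    linear_combination -geom_sum_mul Yv M
  have h1 : ∑ c ∈ Finset.range M, Xv ^ (k + if c + 1 = 0 then 0 else 1) * Yv ^ (k + (c+1))
      = (Xv^(k+1) * Yv^(k+1)) * ∑ c ∈ Finset.range M, Yv ^ c := by
    rw [Finset.mul_sum]
    apply Finset.sum_congr rfl
    intro c _
    rw [if_neg (Nat.succ_ne_zero c)]
    rw [show k + (c+1) = (k+1) + c by ring, pow_add]
    ring
  rw [h1]
  rw [if_pos rfl]
  linear_combination (Xv^(k+1) * Yv^(k+1)) * hg

lemma sum_pow_piFinset (m : ℕ) (Z : MvPolynomial (Fin 2) ℤ) :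
    ∑ b ∈ Fintype.piFinset (fun _ : Fin m => Finset.range 2), Z ^ (∑ j, b j)
      = (1+Z)^m := by
  have h := Finset.prod_univ_sum (fun _ : Fin m => Finset.range 2) (fun _ x => Z ^ x)
  simp only [Finset.prod_pow_eq_pow_sum] at h
  rw [← h]
  have : ∑ x ∈ Finset.range 2, Z ^ x = 1 + Z := by
    rw [Finset.sum_range_succ, Finset.sum_range_one]; simp
  rw [this, Finset.prod_const, Finset.card_univ, Fintype.card_fin]

/-- For every `n ≥ 1`, in `ℤ[X,Y]`:
`(1 - Y) K_{t_n}(X,Y) = (1-Y)(1+XY)^n + XY²(1+XY)^{n-1} - XY²(Y(1+X))^{n-1}`. -/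
theorem stmt4 (n : ℕ) (hn : 1 ≤ n) :
    (1 - Yv) * Kpoly n =
      (1 - Yv) * (1 + Xv * Yv) ^ n +
        Xv * Yv ^ 2 * (1 + Xv * Yv) ^ (n - 1) -
        Xv * Yv ^ 2 * (Yv * (1 + Xv)) ^ (n - 1) := by
  obtain ⟨m, rfl⟩ : ∃ m, n = m + 1 := ⟨n - 1, (Nat.succ_pred_eq_of_pos hn).symm⟩
  have hK : Kpoly (m+1) = ∑ p ∈ (((Fintype.piFinset fun _ : Fin m => Finset.range 2) ×ˢ
        Finset.range (m+2)).filter (fun p => ∑ j, p.1 j + p.2 ≤ m+1)),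
      Xv ^ (∑ j, p.1 j + (if p.2 = 0 then 0 else 1)) * Yv ^ (∑ j, p.1 j + p.2) := by
    rw [Kpoly, ptn_eq, finsum_mem_coe_finset,
      Finset.sum_image (fun p _ q _ hpq => by
        obtain ⟨h1, h2⟩ := snoc_inj p.1 q.1 p.2 q.2 hpq
        exact Prod.ext h1 h2)]
    apply Finset.sum_congr rfl
    rintro ⟨b, c⟩ hp
    simp only [Finset.mem_filter, Finset.mem_product, Fintype.mem_piFinset,
      Finset.mem_range] at hp
    rw [nz_snoc b c (fun j => by have := hp.1.1 j; omega), ht_snoc]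
  have key : (1 - Yv) * Kpoly (m+1)
      = ∑ b ∈ Fintype.piFinset (fun _ : Fin m => Finset.range 2),
        ((1 - Yv + Xv*Yv) * (Xv*Yv)^(∑ j, b j) - Xv * Yv^(m+2) * Xv^(∑ j, b j)) := by
    rw [hK, Finset.mul_sum, Finset.sum_filter, Finset.sum_product]
    apply Finset.sum_congr rfl
    intro b hb
    have hb1 : ∀ j, b j ≤ 1 := by
      intro j
      have := (Fintype.mem_piFinset.mp hb) j
      simp only [Finset.mem_range] at this
      omega
    have hsb : ∑ j, b j ≤ m := by
      calc ∑ j, b j ≤ ∑ _j : Fin m, 1 := Finset.sum_le_sum (fun j _ => hb1 j)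
        _ = m := by simp
    have hfe : (Finset.range (m+2)).filter (fun c => ∑ j, b j + c ≤ m+1)
        = Finset.range ((m+1-∑ j, b j)+1) := by
      ext c
      simp only [Finset.mem_filter, Finset.mem_range]
      omega
    rw [← Finset.sum_filter, hfe, ← Finset.mul_sum]
    dsimp only
    rw [innerSum']
    rw [show (m+1-∑ j, b j)+1 = m+2-∑ j, b j from by omega]
    have hY : Yv ^ (∑ j, b j) * Yv ^ (m+2-∑ j, b j) = Yv ^ (m+2) := by
      rw [← pow_add]
      congr 1
      omega
    calc (Xv*Yv)^(∑ j, b j) * ((1 - Yv + Xv*Yv) - Xv * Yv^(m+2-∑ j, b j))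
        = (1-Yv+Xv*Yv) * (Xv*Yv)^(∑ j, b j)
            - Xv * (Yv^(∑ j, b j) * Yv^(m+2-∑ j, b j)) * Xv^(∑ j, b j) := by
          rw [mul_pow]; ring
      _ = _ := by rw [hY]
  rw [key, Finset.sum_sub_distrib, ← Finset.mul_sum, ← Finset.mul_sum,
    sum_pow_piFinset, sum_pow_piFinset]
  simp only [Nat.add_sub_cancel]
  rw [mul_pow Yv (1+Xv) m]
  ring
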